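/- Let s ≥ 1, C > 0, and let α be an (s+1)×s real matrix with nonnegative entries, with α_{ij} = 0 whenever j ≥ i, and with row sums ∑_{j=1}^{s} α_{ij} ≤ 1 for every 1 ≤ i ≤ s+1. Write α_{1:s} for the top s×s block of α (which is strictly lower triangular, hence nilpotent) and α_{s+1} ∈ ℝ^s for the last row. For z ∈ ℂ define the row vector Q(z) = (1 + z/C) · α_{s+1} · ∑_{k=0}^{s−1} (1 + z/C)^k (α_{1:s})^k (which equals (1 + z/C)·α_{s+1}·(I_s − (1 + z/C)α_{1:s})^{−1}). Then for every z ∈ ℂ with |z + C| ≤ C and every 1 ≤ j ≤ s, the j-th component of Q(z) satisfies |Q_j(z)| ≤ 1. -/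

import Mathlib

section aux
variable (s : ℕ) (α : Fin (s+1) → Fin s → ℝ)
  (hα0 : ∀ i j, 0 ≤ α i j)
  (hαexp : ∀ (i : Fin (s+1)) (j : Fin s), (i : ℕ) ≤ (j : ℕ) → α i j = 0)
  (hαrow : ∀ i, ∑ j, α i j ≤ 1)
  (Ar : Matrix (Fin s) (Fin s) ℝ) (hAr : ∀ i j, Ar i j = α i.castSucc j)

include hα0 hAr in
lemma ssp_pow_nonneg (k : ℕ) : ∀ i j, 0 ≤ (Ar ^ k) i j := by
  induction k with
  | zero => intro i j; simp [Matrix.one_apply]; split <;> norm_num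
  | succ k ih =>
    intro i j
    rw [pow_succ, Matrix.mul_apply]
    exact Finset.sum_nonneg fun m _ => mul_nonneg (ih i m) (by rw [hAr]; exact hα0 _ _)

include hα0 hAr in
lemma ssp_vecMul_nonneg (k : ℕ) (i : Fin (s+1)) (j : Fin s) :
    0 ≤ Matrix.vecMul (α i) (Ar ^ k) j := by
  rw [Matrix.vecMul, dotProduct]
  exact Finset.sum_nonneg fun m _ => mul_nonneg (hα0 _ _) (ssp_pow_nonneg s α hα0 Ar hAr k m j)

include hαexp hAr in
lemma ssp_vecMul_vanish (k : ℕ) : ∀ (i : Fin (s+1)) (j : Fin s), (i : ℕ) ≤ (j : ℕ) →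
    Matrix.vecMul (α i) (Ar ^ k) j = 0 := by
  induction k with
  | zero => intro i j h; simpa [Matrix.vecMul_one] using hαexp i j h
  | succ k ih =>
    intro i j h
    rw [pow_succ, ← Matrix.vecMul_vecMul, Matrix.vecMul, dotProduct]
    apply Finset.sum_eq_zero
    intro m _
    rcases le_or_gt (m : ℕ) (j : ℕ) with hm | hm
    · rw [hAr]
      rw [hαexp m.castSucc j (by simpa using hm), mul_zero]
    · rw [ih i m (h.trans hm.le), zero_mul]
end aux

section aux2
variable (s : ℕ) (α : Fin (s+1) → Fin s → ℝ)
  (hα0 : ∀ i j, 0 ≤ α i j)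
  (hαexp : ∀ (i : Fin (s+1)) (j : Fin s), (i : ℕ) ≤ (j : ℕ) → α i j = 0)
  (hαrow : ∀ i, ∑ j, α i j ≤ 1)
  (Ar : Matrix (Fin s) (Fin s) ℝ) (hAr : ∀ i j, Ar i j = α i.castSucc j)

include hα0 hαexp hαrow hAr in
lemma ssp_sum_le : ∀ (n : ℕ) (i : Fin (s+1)), (i : ℕ) ≤ n → ∀ j : Fin s,
    ∑ k ∈ Finset.range s, Matrix.vecMul (α i) (Ar ^ k) j ≤ 1 := by
  intro n
  induction n with
  | zero =>
    intro i hi j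
    rw [Finset.sum_eq_zero
      (fun k _ => ssp_vecMul_vanish s α hαexp Ar hAr k i j (by omega))]
    norm_num
  | succ n ih =>
    intro i hi j
    have hnn : ∀ k, 0 ≤ Matrix.vecMul (α i) (Ar ^ k) j :=
      fun k => ssp_vecMul_nonneg s α hα0 Ar hAr k i j
    have h1 : ∑ k ∈ Finset.range s, Matrix.vecMul (α i) (Ar ^ k) j
        ≤ ∑ k ∈ Finset.range (s+1), Matrix.vecMul (α i) (Ar ^ k) j :=
      Finset.sum_le_sum_of_subset_of_nonneg (Finset.range_subset_range.2 (Nat.le_succ s))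
        (fun k _ _ => hnn k)
    have h2 : ∑ k ∈ Finset.range (s+1), Matrix.vecMul (α i) (Ar ^ k) j
        = α i j + ∑ k ∈ Finset.range s, Matrix.vecMul (α i) (Ar ^ (k+1)) j := by
      rw [Finset.sum_range_succ', pow_zero, Matrix.vecMul_one]
      ring
    have h3 : ∀ k, Matrix.vecMul (α i) (Ar ^ (k+1)) j
        = ∑ p, α i p * Matrix.vecMul (α p.castSucc) (Ar ^ k) j := by
      intro k
      simp [pow_succ', Matrix.vecMul, dotProduct, Matrix.mul_apply,
        Finset.mul_sum, hAr]
    have h4 : ∀ p : Fin s,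
        α i p * (∑ k ∈ Finset.range s, Matrix.vecMul (α p.castSucc) (Ar ^ k) j)
        ≤ if (j : ℕ) < (p : ℕ) then α i p else 0 := by
      intro p
      rcases le_or_gt (p : ℕ) (j : ℕ) with hp | hp
      · rw [if_neg (not_lt.2 hp), Finset.sum_eq_zero
          (fun k _ => ssp_vecMul_vanish s α hαexp Ar hAr k p.castSucc j (by simpa using hp)),
          mul_zero]
      · rw [if_pos hp]
        rcases le_or_gt (i : ℕ) (p : ℕ) with hip | hip
        · rw [hαexp i p hip, zero_mul]
        · have hT := ih p.castSucc (by simpa using Nat.lt_succ_iff.mp (hip.trans_le hi)) j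
          calc α i p * _ ≤ α i p * 1 := mul_le_mul_of_nonneg_left hT (hα0 i p)
            _ = α i p := mul_one _
    have h5 : ∑ k ∈ Finset.range s, Matrix.vecMul (α i) (Ar ^ (k+1)) j
        = ∑ p, α i p * (∑ k ∈ Finset.range s, Matrix.vecMul (α p.castSucc) (Ar ^ k) j) := by
      simp only [h3, Finset.mul_sum]
      rw [Finset.sum_comm]
    have h6 : ∑ p, α i p * (∑ k ∈ Finset.range s, Matrix.vecMul (α p.castSucc) (Ar ^ k) j)
        ≤ ∑ p ∈ Finset.univ.filter (fun p : Fin s => (j : ℕ) < (p : ℕ)), α i p := by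
      rw [Finset.sum_filter]
      exact Finset.sum_le_sum fun p _ => h4 p
    have hj : j ∉ Finset.univ.filter (fun p : Fin s => (j : ℕ) < (p : ℕ)) := by simp
    have h7 : α i j + ∑ p ∈ Finset.univ.filter (fun p : Fin s => (j : ℕ) < (p : ℕ)), α i p
        ≤ ∑ p, α i p := by
      rw [← Finset.sum_insert hj]
      exact Finset.sum_le_sum_of_subset_of_nonneg (Finset.subset_univ _) (fun p _ _ => hα0 i p)
    calc ∑ k ∈ Finset.range s, Matrix.vecMul (α i) (Ar ^ k) j
        ≤ α i j + ∑ k ∈ Finset.range s, Matrix.vecMul (α i) (Ar ^ (k+1)) j := by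
          rw [← h2]; exact h1
      _ ≤ α i j + ∑ p ∈ Finset.univ.filter (fun p : Fin s => (j : ℕ) < (p : ℕ)), α i p := by
          rw [h5]; exact add_le_add_right h6 _
      _ ≤ ∑ p, α i p := h7
      _ ≤ 1 := hαrow i
end aux2

/-- **Theorem 3.2.** For an explicit SSP Runge–Kutta method with SSP coefficient `C > 0`
in canonical Shu–Osher form `α` (nonnegative entries, strictly lower triangular,
row sums ≤ 1), each internal stability function
`Q(z) = (1 + z/C) · α_{s+1} · ∑_{k<s} (1+z/C)^k (α_{1:s})^k`
satisfies `|Q_j(z)| ≤ 1` on the disk `|z + C| ≤ C`. -/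
theorem ssp_internal_stability_on_disk
    (s : ℕ) (hs : 1 ≤ s) (C : ℝ) (hC : 0 < C)
    (α : Fin (s+1) → Fin s → ℝ)
    (hα0 : ∀ i j, 0 ≤ α i j)
    (hαexp : ∀ (i : Fin (s+1)) (j : Fin s), (i : ℕ) ≤ (j : ℕ) → α i j = 0)
    (hαrow : ∀ i, ∑ j, α i j ≤ 1)
    (A : Matrix (Fin s) (Fin s) ℂ) (hA : ∀ i j, A i j = (α i.castSucc j : ℂ))
    (b : Fin s → ℂ) (hb : ∀ j, b j = (α (Fin.last s) j : ℂ))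
    (Q : ℂ → Fin s → ℂ)
    (hQ : ∀ z, Q z = fun j =>
      (1 + z / C) * Matrix.vecMul b (∑ k ∈ Finset.range s, (1 + z / C) ^ k • A ^ k) j)
    (z : ℂ) (hz : ‖z + (C : ℂ)‖ ≤ C) (j : Fin s) :
    ‖Q z j‖ ≤ 1 := by
  set Ar : Matrix (Fin s) (Fin s) ℝ := fun i j => α i.castSucc j with hArdef
  have hAr : ∀ i j, Ar i j = α i.castSucc j := fun i j => rfl
  set w : ℂ := 1 + z / C with hw
  have hCne : (C : ℂ) ≠ 0 := by exact_mod_cast hC.ne'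
  have hwle : ‖w‖ ≤ 1 := by
    have hweq : w = (z + C) / C := by rw [hw]; field_simp; ring
    rw [hweq, norm_div, Complex.norm_real, Real.norm_of_nonneg hC.le, div_le_one hC]
    exact hz
  -- powers of A are real
  have hAdef : A = Matrix.map Ar Complex.ofRealHom := by
    ext i j; simp [hA, Matrix.map_apply, hAr]
  have hpow : ∀ k : ℕ, A ^ k = Matrix.map (Ar ^ k) Complex.ofRealHom := by
    intro k
    rw [hAdef, ← RingHom.mapMatrix_apply, ← map_pow, RingHom.mapMatrix_apply]
  set r : ℕ → ℝ := fun k => Matrix.vecMul (α (Fin.last s)) (Ar ^ k) j with hr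
  have hvec : ∀ k : ℕ, Matrix.vecMul b (A ^ k) j = ((r k : ℝ) : ℂ) := by
    intro k
    rw [hpow k]
    simp only [Matrix.vecMul, dotProduct, Matrix.map_apply, hb, hr,
      Complex.ofRealHom_eq_coe]
    push_cast
    rfl
  have hQj : Q z j = w * ∑ k ∈ Finset.range s, w ^ k * ((r k : ℝ) : ℂ) := by
    rw [hQ]
    simp only [← hw]
    congr 1
    have hsplit : Matrix.vecMul b (∑ k ∈ Finset.range s, w ^ k • A ^ k) j
        = ∑ k ∈ Finset.range s, w ^ k * Matrix.vecMul b (A ^ k) j := by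
      simp only [Matrix.vecMul, dotProduct, Matrix.sum_apply, Matrix.smul_apply,
        smul_eq_mul, Finset.mul_sum]
      rw [Finset.sum_comm]
      exact Finset.sum_congr rfl fun k _ => Finset.sum_congr rfl fun m _ => by ring
    rw [hsplit]
    exact Finset.sum_congr rfl fun k _ => by rw [hvec k]
  have hr0 : ∀ k, 0 ≤ r k := fun k => ssp_vecMul_nonneg s α hα0 Ar hAr k (Fin.last s) j
  have hrsum : ∑ k ∈ Finset.range s, r k ≤ 1 :=
    ssp_sum_le s α hα0 hαexp hαrow Ar hAr s (Fin.last s) (by simp) j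
  calc ‖Q z j‖
      = ‖w‖ * ‖∑ k ∈ Finset.range s, w ^ k * ((r k : ℝ) : ℂ)‖ := by
        rw [hQj, norm_mul]
    _ ≤ 1 * ‖∑ k ∈ Finset.range s, w ^ k * ((r k : ℝ) : ℂ)‖ :=
        mul_le_mul_of_nonneg_right hwle (norm_nonneg _)
    _ = ‖∑ k ∈ Finset.range s, w ^ k * ((r k : ℝ) : ℂ)‖ := one_mul _
    _ ≤ ∑ k ∈ Finset.range s, ‖w ^ k * ((r k : ℝ) : ℂ)‖ :=
        norm_sum_le _ _
    _ ≤ ∑ k ∈ Finset.range s, r k := by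
        apply Finset.sum_le_sum
        intro k _
        rw [norm_mul, norm_pow, Complex.norm_real, Real.norm_of_nonneg (hr0 k)]
        have h1 : ‖w‖ ^ k ≤ 1 := pow_le_one₀ (norm_nonneg _) hwle
        calc ‖w‖ ^ k * r k ≤ 1 * r k :=
              mul_le_mul_of_nonneg_right h1 (hr0 k)
          _ = r k := one_mul _
    _ ≤ 1 := hrsum
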